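/- Let H be a bipartite graph on m vertices without isolated vertices, whose maximal matchings all have size x, and let G be a triangle-free graph on n vertices with minimum degree δ and maximum degree Δ. Then for a vertex u of minimum degree, the number of injective embeddings of H into G whose image contains u is at most m · δ · 2^{c−1} · |E(G)|^{x−1} · Δ^{m−2x}, where c is the number of connected components of H. -/

import Mathlib

/-- `M` is a matching in `H`: a set of edges of `H` that are pairwise disjoint. -/
def IsMatchingSet {V : Type*} (H : SimpleGraph V) (M : Finset (Sym2 V)) : Prop :=
  (M : Set (Sym2 V)) ⊆ H.edgeSet ∧
    (M : Set (Sym2 V)).Pairwise fun e f => ∀ v, v ∈ e → v ∉ f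

/-- The `H`-degree of a vertex `v` of `G`: the number of injective embeddings of `H`
in `G` whose image contains `v`. -/
noncomputable def hDeg {α β : Type*} [Fintype α] [Fintype β]
    (H : SimpleGraph α) (G : SimpleGraph β) (v : β) : ℕ :=
  Nat.card {f : α → β // Function.Injective f ∧ (∀ a b, H.Adj a b → G.Adj (f a) (f b)) ∧
    v ∈ Set.range f}



section HDegAux

attribute [local instance] Classical.propDecidable
set_option linter.unusedSectionVars false

variable {α β : Type*} [Fintype α] [Fintype β]

/-- `v` is covered by the matching `M`. -/
def HMatched (M : Finset (Sym2 α)) (v : α) : Prop := ∃ e ∈ M, v ∈ e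

noncomputable def hMedge (M : Finset (Sym2 α)) (v : α) : Sym2 α :=
  if h : HMatched M v then h.choose else s(v, v)

lemma hMedge_spec {M : Finset (Sym2 α)} {v : α} (h : HMatched M v) :
    hMedge M v ∈ M ∧ v ∈ hMedge M v := by
  rw [hMedge, dif_pos h]; exact h.choose_spec

noncomputable def hPartner (M : Finset (Sym2 α)) (v : α) : α :=
  if h : HMatched M v then Sym2.Mem.other (hMedge_spec h).2 else v

lemma hPartner_spec {M : Finset (Sym2 α)} {v : α} (h : HMatched M v) :
    s(v, hPartner M v) = hMedge M v := by
  rw [hPartner, dif_pos h]; exact Sym2.other_spec _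

noncomputable def hNb (H : SimpleGraph α) (v : α) : α :=
  if h : ∃ w, H.Adj v w then h.choose else v

lemma hNb_spec {H : SimpleGraph α} {v : α} (h : ∃ w, H.Adj v w) : H.Adj v (hNb H v) := by
  rw [hNb, dif_pos h]; exact h.choose_spec

noncomputable def hRC (H : SimpleGraph α) (M : Finset (Sym2 α)) (C : H.ConnectedComponent) : α :=
  if h : ∃ v, H.connectedComponentMk v = C ∧ HMatched M v then h.choose else Quot.out C

lemma hRC_spec {H : SimpleGraph α} {M : Finset (Sym2 α)} {C : H.ConnectedComponent}
    (h : ∃ v, H.connectedComponentMk v = C ∧ HMatched M v) :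
    H.connectedComponentMk (hRC H M C) = C ∧ HMatched M (hRC H M C) := by
  rw [hRC, dif_pos h]; exact h.choose_spec

noncomputable def hS (H : SimpleGraph α) (M : Finset (Sym2 α)) (a : α) : α :=
  if HMatched M a then hPartner M a else hNb H a

noncomputable def hE0 (H : SimpleGraph α) (M : Finset (Sym2 α)) (a : α) : Sym2 α :=
  hMedge M (hS H M a)

noncomputable def hRt (H : SimpleGraph α) (M : Finset (Sym2 α)) (a v : α) : α :=
  if H.connectedComponentMk v = H.connectedComponentMk a then a
  else hRC H M (H.connectedComponentMk v)

noncomputable def hRk (H : SimpleGraph α) (M : Finset (Sym2 α)) (a v : α) : ℕ :=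
  H.dist (hRt H M a v) v

noncomputable def hPar (H : SimpleGraph α) (M : Finset (Sym2 α)) (a v : α) : α :=
  if h : ∃ w, H.Adj w v ∧ hRk H M a w < hRk H M a v then h.choose else v

lemma hPar_spec {H : SimpleGraph α} {M : Finset (Sym2 α)} {a v : α}
    (h : ∃ w, H.Adj w v ∧ hRk H M a w < hRk H M a v) :
    H.Adj (hPar H M a v) v ∧ hRk H M a (hPar H M a v) < hRk H M a v := by
  rw [hPar, dif_pos h]; exact h.choose_spec

noncomputable def hU (M : Finset (Sym2 α)) : Finset α :=
  Finset.univ.filter fun v => ¬ HMatched M v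

noncomputable def hS3 (H : SimpleGraph α) (M : Finset (Sym2 α)) (a : α) : Finset α :=
  if HMatched M a then hU M else insert (hPartner M (hNb H a)) ((hU M).erase a)

noncomputable def hZ (H : SimpleGraph α) (M : Finset (Sym2 α)) (a v : α) : α :=
  if ¬ HMatched M a ∧ v = hPartner M (hNb H a) then hNb H a else hPar H M a v

noncomputable def hPick (e : Sym2 β) : β := (Quot.out e).1

lemma hPick_eq (e : Sym2 β) : ∃ w, e = s(hPick e, w) := by
  refine ⟨(Quot.out e).2, ?_⟩
  conv_lhs => rw [← Quot.out_eq e]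
  rfl

noncomputable def hEmb (G : SimpleGraph β) [DecidableRel G.Adj] (w : β) :
    ↥(G.neighborFinset w) → Fin G.maxDegree :=
  fun z => Fin.castLE (by
    rw [Fintype.card_coe]; exact G.degree_le_maxDegree w) (Fintype.equivFin _ z)

lemma hEmb_inj (G : SimpleGraph β) [DecidableRel G.Adj] (w : β) :
    Function.Injective (hEmb G w) := by
  intro x y h
  have := Fin.castLE_injective _ h
  exact (Fintype.equivFin _).injective this

end HDegAux



section HDegAux2
set_option linter.unusedSectionVars false
attribute [local instance] Classical.propDecidable
variable {α : Type*} [Fintype α] {H : SimpleGraph α} {M : Finset (Sym2 α)}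

-- symmetric relation
lemma matchRel_symm :
    Symmetric fun e f : Sym2 α => ∀ v, v ∈ e → v ∉ f := by
  intro e f h v hvf hve
  exact h v hve hvf

lemma hMedge_unique (hM : IsMatchingSet H M) {e : Sym2 α} {v : α}
    (he : e ∈ M) (hv : v ∈ e) : e = hMedge M v := by
  have hm : HMatched M v := ⟨e, he, hv⟩
  by_contra hne
  exact hM.2 (by exact_mod_cast he) (by exact_mod_cast (hMedge_spec hm).1) hne v hv
    (hMedge_spec hm).2

lemma hPartner_mem {v : α} (h : HMatched M v) : hPartner M v ∈ hMedge M v := by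
  rw [← hPartner_spec h]; exact Sym2.mem_mk_right _ _

lemma hPartner_matched {v : α} (h : HMatched M v) : HMatched M (hPartner M v) :=
  ⟨hMedge M v, (hMedge_spec h).1, hPartner_mem h⟩

lemma hMedge_mem_edgeSet (hM : IsMatchingSet H M) {v : α} (h : HMatched M v) :
    hMedge M v ∈ H.edgeSet := hM.1 (by exact_mod_cast (hMedge_spec h).1)

lemma hPartner_adj (hM : IsMatchingSet H M) {v : α} (h : HMatched M v) :
    H.Adj v (hPartner M v) := by
  have := hMedge_mem_edgeSet hM h
  rw [← hPartner_spec h] at this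
  exact this

lemma hPartner_ne (hM : IsMatchingSet H M) {v : α} (h : HMatched M v) :
    v ≠ hPartner M v := (hPartner_adj hM h).ne

lemma hPartner_partner (hM : IsMatchingSet H M) {v : α} (h : HMatched M v) :
    hPartner M (hPartner M v) = v := by
  have hw : HMatched M (hPartner M v) := hPartner_matched h
  have h1 : hMedge M (hPartner M v) = hMedge M v :=
    (hMedge_unique hM (hMedge_spec h).1 (hPartner_mem h)).symm
  have h2 : s(hPartner M v, hPartner M (hPartner M v)) = s(v, hPartner M v) := by
    rw [hPartner_spec hw, h1, hPartner_spec h]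
  rw [Sym2.eq_iff] at h2
  rcases h2 with ⟨h2a, h2b⟩ | ⟨h2a, h2b⟩
  · exact absurd h2a.symm (hPartner_ne hM h)
  · exact h2b

-- maximality consequence
lemma matched_of_adj (hM : IsMatchingSet H M)
    (hMax : ∀ N : Finset (Sym2 α), IsMatchingSet H N → N.card ≤ M.card)
    {v w : α} (hadj : H.Adj v w) (hv : ¬ HMatched M v) : HMatched M w := by
  by_contra hw
  have hnm : s(v, w) ∉ M := fun hmem => hv ⟨_, hmem, Sym2.mem_mk_left _ _⟩
  have hins : IsMatchingSet H (insert s(v, w) M) := ?_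
  · have hcard := hMax _ hins
    rw [Finset.card_insert_of_notMem hnm] at hcard
    omega
  constructor
  · rw [Finset.coe_insert]
    exact Set.insert_subset (by rwa [SimpleGraph.mem_edgeSet]) hM.1
  · rw [Finset.coe_insert]
    haveI : Std.Symm (fun e f : Sym2 α => ∀ v, v ∈ e → v ∉ f) := ⟨fun _ _ h => matchRel_symm h⟩
    rw [Set.pairwise_insert_of_symm]
    refine ⟨hM.2, ?_⟩
    intro e he _ z hz hze
    rw [Sym2.mem_iff] at hz
    rcases hz with rfl | rfl
    · exact hv ⟨e, by exact_mod_cast he, hze⟩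
    · exact hw ⟨e, by exact_mod_cast he, hze⟩

lemma exists_adj_dist_lt {r v : α} (hr : H.Reachable r v) (hne : v ≠ r) :
    ∃ w, H.Adj w v ∧ H.dist r w < H.dist r v := by
  obtain ⟨q, hq⟩ := hr.symm.exists_walk_length_eq_dist
  obtain ⟨w, hadj, q', rfl⟩ := SimpleGraph.Walk.exists_eq_cons_of_ne hne q
  refine ⟨w, hadj.symm, ?_⟩
  have h1 : H.dist w r ≤ q'.length := SimpleGraph.dist_le q'
  have h2 : q'.length + 1 = H.dist v r := by simpa using hq
  have h3 : H.dist r w = H.dist w r := SimpleGraph.dist_comm ..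
  have h4 : H.dist r v = H.dist v r := SimpleGraph.dist_comm ..
  omega

lemma rc_exists (hM : IsMatchingSet H M)
    (hMax : ∀ N : Finset (Sym2 α), IsMatchingSet H N → N.card ≤ M.card)
    (hniso : ∀ v : α, ∃ w, H.Adj v w) (C : H.ConnectedComponent) :
    ∃ v, H.connectedComponentMk v = C ∧ HMatched M v := by
  obtain ⟨v, hv⟩ := C.exists_rep
  have hv : H.connectedComponentMk v = C := hv
  by_cases h : HMatched M v
  · exact ⟨v, hv, h⟩
  · refine ⟨hNb H v, ?_, matched_of_adj hM hMax (hNb_spec (hniso v)) h⟩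
    rw [← hv]
    exact (SimpleGraph.ConnectedComponent.connectedComponentMk_eq_of_adj (hNb_spec (hniso v))).symm

lemma hRt_comp (hM : IsMatchingSet H M)
    (hMax : ∀ N : Finset (Sym2 α), IsMatchingSet H N → N.card ≤ M.card)
    (hniso : ∀ v : α, ∃ w, H.Adj v w) (a v : α) :
    H.connectedComponentMk (hRt H M a v) = H.connectedComponentMk v := by
  rw [hRt]
  split
  · next h => exact h.symm
  · exact (hRC_spec (rc_exists hM hMax hniso _)).1

lemma hRt_congr (a : α) {v w : α}
    (h : H.connectedComponentMk v = H.connectedComponentMk w) :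
    hRt H M a v = hRt H M a w := by
  rw [hRt, hRt, h]

lemma exists_par_of_ne (hM : IsMatchingSet H M)
    (hMax : ∀ N : Finset (Sym2 α), IsMatchingSet H N → N.card ≤ M.card)
    (hniso : ∀ v : α, ∃ w, H.Adj v w) {a v : α} (h : v ≠ hRt H M a v) :
    ∃ w, H.Adj w v ∧ hRk H M a w < hRk H M a v := by
  have hreach : H.Reachable (hRt H M a v) v :=
    SimpleGraph.ConnectedComponent.exact (hRt_comp hM hMax hniso a v)
  obtain ⟨w, hadj, hlt⟩ := exists_adj_dist_lt hreach h
  refine ⟨w, hadj, ?_⟩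
  rw [hRk, hRk,
    hRt_congr a (SimpleGraph.ConnectedComponent.connectedComponentMk_eq_of_adj hadj)]
  exact hlt

lemma hS_adj (hM : IsMatchingSet H M) (hniso : ∀ v : α, ∃ w, H.Adj v w) (a : α) :
    H.Adj a (hS H M a) := by
  rw [hS]
  split
  · next h => exact hPartner_adj hM h
  · exact hNb_spec (hniso a)

lemma hS_matched (hM : IsMatchingSet H M)
    (hMax : ∀ N : Finset (Sym2 α), IsMatchingSet H N → N.card ≤ M.card)
    (hniso : ∀ v : α, ∃ w, H.Adj v w) (a : α) :
    HMatched M (hS H M a) := by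
  rw [hS]
  split
  · next h => exact hPartner_matched h
  · next h => exact matched_of_adj hM hMax (hNb_spec (hniso a)) h

lemma hDecode {β : Type*} [Fintype β] {G : SimpleGraph β}
    (hM : IsMatchingSet H M)
    (hMax : ∀ N : Finset (Sym2 α), IsMatchingSet H N → N.card ≤ M.card)
    (hniso : ∀ v : α, ∃ w, H.Adj v w)
    (hG : G.CliqueFree 3) {u : β} {a : α} {f g : α → β}
    (hf : ∀ b c, H.Adj b c → G.Adj (f b) (f c))
    (hg : ∀ b c, H.Adj b c → G.Adj (g b) (g c))
    (hfa : f a = u) (hga : g a = u)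
    (h1 : f (hS H M a) = g (hS H M a))
    (h2 : ∀ e ∈ M, e ≠ hE0 H M a → Sym2.map f e = Sym2.map g e)
    (h3 : ∀ C : H.ConnectedComponent, C ≠ H.connectedComponentMk a →
      ((f (hRC H M C) = hPick (Sym2.map f (hMedge M (hRC H M C)))) ↔
       (g (hRC H M C) = hPick (Sym2.map g (hMedge M (hRC H M C))))))
    (h4 : ∀ v ∈ hS3 H M a, f (hZ H M a v) = g (hZ H M a v) → f v = g v) :
    f = g := by
  have hSm : HMatched M (hS H M a) := hS_matched hM hMax hniso a
  have hcomp_s : H.connectedComponentMk (hS H M a) = H.connectedComponentMk a :=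
    (SimpleGraph.ConnectedComponent.connectedComponentMk_eq_of_adj (hS_adj hM hniso a)).symm
  have hE0eq : hE0 H M a = s(hS H M a, hPartner M (hS H M a)) := (hPartner_spec hSm).symm
  have key : ∀ n, ∀ v, hRk H M a v = n → f v = g v := by
    intro n
    induction n using Nat.strong_induction_on with
    | _ n ih =>
    intro v hv
    by_cases hva : v = a
    · rw [hva, hfa, hga]
    by_cases hvs : v = hS H M a
    · rw [hvs]; exact h1
    by_cases hv5 : ¬ HMatched M a ∧ v = hPartner M (hNb H a)
    · have hz : hZ H M a v = hNb H a := if_pos hv5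
      refine h4 v ?_ ?_
      · rw [hS3, if_neg hv5.1, hv5.2]
        exact Finset.mem_insert_self _ _
      · rw [hz]
        have hsn : hS H M a = hNb H a := by rw [hS, if_neg hv5.1]
        rw [← hsn]
        exact h1
    by_cases hroot : v = hRt H M a v
    · -- root of another component
      have hcomp : H.connectedComponentMk v ≠ H.connectedComponentMk a := by
        intro h
        rw [hRt, if_pos h] at hroot
        exact hva hroot
      have hrt : hRt H M a v = hRC H M (H.connectedComponentMk v) := by
        rw [hRt, if_neg hcomp]
      have hvrc : v = hRC H M (H.connectedComponentMk v) := hroot.trans hrt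
      have hmv : HMatched M v := by
        have h5 := (hRC_spec (rc_exists hM hMax hniso (H.connectedComponentMk v))).2
        rwa [← hvrc] at h5
      have heC : hMedge M v ≠ hE0 H M a := by
        intro heq
        have hvmem : v ∈ hE0 H M a := heq ▸ (hMedge_spec hmv).2
        rw [hE0eq, Sym2.mem_iff] at hvmem
        rcases hvmem with rfl | rfl
        · exact hcomp hcomp_s
        · refine hcomp (Eq.trans ?_ hcomp_s)
          exact (SimpleGraph.ConnectedComponent.connectedComponentMk_eq_of_adj
            (hPartner_adj hM hSm)).symm
      have hmap : Sym2.map f (hMedge M v) = Sym2.map g (hMedge M v) :=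
        h2 _ (hMedge_spec hmv).1 heC
      have hmemf : f v ∈ Sym2.map f (hMedge M v) :=
        Sym2.mem_map.2 ⟨v, (hMedge_spec hmv).2, rfl⟩
      have hmemg : g v ∈ Sym2.map f (hMedge M v) := by
        rw [hmap]
        exact Sym2.mem_map.2 ⟨v, (hMedge_spec hmv).2, rfl⟩
      have hiff := h3 _ hcomp
      rw [← hvrc, hmap] at hiff
      obtain ⟨w, hw⟩ := hPick_eq (Sym2.map g (hMedge M v))
      rw [hmap] at hmemf hmemg
      rw [hw, Sym2.mem_iff] at hmemf hmemg
      rcases hmemf with hmf | hmf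
      · rw [hmf, hiff.1 hmf]
      · rcases hmemg with hmg | hmg
        · rw [hiff.2 hmg, hmg]
        · rw [hmf, hmg]
    · -- non-root
      obtain ⟨hparadj, hparlt⟩ := hPar_spec (exists_par_of_ne hM hMax hniso hroot)
      have hz_eq : f (hPar H M a v) = g (hPar H M a v) :=
        ih _ (hv ▸ hparlt) _ rfl
      by_cases hmv : HMatched M v
      · -- matched, non-root, not in e0
        have heC : hMedge M v ≠ hE0 H M a := by
          intro heq
          have hvmem : v ∈ hE0 H M a := heq ▸ (hMedge_spec hmv).2
          rw [hE0eq, Sym2.mem_iff] at hvmem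
          rcases hvmem with rfl | rfl
          · exact hvs rfl
          · by_cases hma : HMatched M a
            · have hsa : hS H M a = hPartner M a := by rw [hS, if_pos hma]
              have : hPartner M (hS H M a) = a := by rw [hsa, hPartner_partner hM hma]
              exact hva this
            · have hsa : hS H M a = hNb H a := by rw [hS, if_neg hma]
              exact hv5 ⟨hma, by rw [← hsa]⟩
        have hmap : Sym2.map f (hMedge M v) = Sym2.map g (hMedge M v) :=
          h2 _ (hMedge_spec hmv).1 heC
        by_cases hfg : f v = g v
        · exact hfg
        exfalso
        have hme : hMedge M v = s(v, hPartner M v) := (hPartner_spec hmv).symm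
        have hgmem : g v ∈ Sym2.map f (hMedge M v) := by
          rw [hmap]
          exact Sym2.mem_map.2 ⟨v, (hMedge_spec hmv).2, rfl⟩
        rw [hme, Sym2.map_pair_eq, Sym2.mem_iff] at hgmem
        rcases hgmem with hgv | hgv
        · exact hfg hgv.symm
        have a1 : G.Adj (f (hPar H M a v)) (f v) := hf _ _ hparadj
        have a2 : G.Adj (f (hPar H M a v)) (g v) := by
          rw [hz_eq]
          exact hg _ _ hparadj
        have a3 : G.Adj (f v) (g v) := by
          rw [hgv]
          exact hf _ _ (hPartner_adj hM hmv)
        exact hG _ (SimpleGraph.is3Clique_triple_iff.2 ⟨a1, a2, a3⟩)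
      · -- unmatched, non-root
        have hzv : hZ H M a v = hPar H M a v := by
          rw [hZ]
          refine if_neg ?_
          rintro ⟨hma, hveq⟩
          have : HMatched M v := hveq ▸ hPartner_matched (matched_of_adj hM hMax (hNb_spec (hniso a)) hma)
          exact hmv this
        refine h4 v ?_ (by rw [hzv]; exact hz_eq)
        rw [hS3]
        split
        · rw [hU, Finset.mem_filter]
          exact ⟨Finset.mem_univ _, hmv⟩
        · next hma =>
          refine Finset.mem_insert_of_mem (Finset.mem_erase.2 ⟨hva, ?_⟩)
          rw [hU, Finset.mem_filter]
          exact ⟨Finset.mem_univ _, hmv⟩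
  funext v
  exact key _ v rfl

lemma card_matched_filter (hM : IsMatchingSet H M) :
    (Finset.univ.filter fun v : α => HMatched M v).card = 2 * M.card := by
  have hbi : (Finset.univ.filter fun v : α => HMatched M v)
      = M.biUnion (fun e => Finset.univ.filter (· ∈ e)) := by
    ext v
    rw [Finset.mem_filter, Finset.mem_biUnion]
    simp [HMatched]
  rw [hbi, Finset.card_biUnion]
  · have hcard : ∀ e ∈ M, (Finset.univ.filter (· ∈ e)).card = 2 := by
      intro e he
      have hdiag : ¬ e.IsDiag :=
        H.not_isDiag_of_mem_edgeSet (hM.1 (by exact_mod_cast he))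
      induction e with
      | _ x y =>
        have hxy : x ≠ y := by simpa using hdiag
        have : (Finset.univ.filter (· ∈ s(x, y))) = {x, y} := by
          ext z
          simp [Sym2.mem_iff]
        rw [this, Finset.card_insert_of_notMem (by simpa using hxy),
          Finset.card_singleton]
    rw [Finset.sum_congr rfl hcard, Finset.sum_const, smul_eq_mul, mul_comm]
  · intro e he e' he' hne
    rw [Function.onFun, Finset.disjoint_left]
    intro z hz hz'
    rw [Finset.mem_filter] at hz hz'
    exact hM.2 (by exact_mod_cast he) (by exact_mod_cast he') hne z hz.2 hz'.2

lemma card_hU (hM : IsMatchingSet H M) :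
    (hU M).card = Fintype.card α - 2 * M.card := by
  rw [hU, Finset.filter_not, Finset.card_sdiff_of_subset (Finset.filter_subset _ _),
    card_matched_filter hM, Finset.card_univ]

lemma card_hS3 (hM : IsMatchingSet H M)
    (hMax : ∀ N : Finset (Sym2 α), IsMatchingSet H N → N.card ≤ M.card)
    (hniso : ∀ v : α, ∃ w, H.Adj v w) (a : α) :
    (hS3 H M a).card = Fintype.card α - 2 * M.card := by
  rw [hS3]
  split
  · exact card_hU hM
  · next hma =>
    have hpm : HMatched M (hPartner M (hNb H a)) :=
      hPartner_matched (matched_of_adj hM hMax (hNb_spec (hniso a)) hma)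
    have hnotmem : hPartner M (hNb H a) ∉ (hU M).erase a := by
      intro hmem
      have := (Finset.mem_erase.1 hmem).2
      rw [hU, Finset.mem_filter] at this
      exact this.2 hpm
    have hainU : a ∈ hU M := by
      rw [hU, Finset.mem_filter]
      exact ⟨Finset.mem_univ _, hma⟩
    rw [Finset.card_insert_of_notMem hnotmem,
      Finset.card_erase_of_mem hainU, ← card_hU hM]
    have : 1 ≤ (hU M).card := Finset.card_pos.2 ⟨a, hainU⟩
    omega

lemma hE0_mem (hM : IsMatchingSet H M)
    (hMax : ∀ N : Finset (Sym2 α), IsMatchingSet H N → N.card ≤ M.card)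
    (hniso : ∀ v : α, ∃ w, H.Adj v w) (a : α) : hE0 H M a ∈ M :=
  (hMedge_spec (hS_matched hM hMax hniso a)).1

lemma hS3_cases (_hma' : True) {a v : α} (hv : v ∈ hS3 H M a)
    (hne : ¬(¬ HMatched M a ∧ v = hPartner M (hNb H a))) :
    ¬ HMatched M v ∧ v ≠ a := by
  rw [hS3] at hv
  by_cases hma : HMatched M a
  · rw [if_pos hma] at hv
    rw [hU, Finset.mem_filter] at hv
    exact ⟨hv.2, fun h => hv.2 (h ▸ hma)⟩
  · rw [if_neg hma] at hv
    rcases Finset.mem_insert.1 hv with h | h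
    · exact absurd ⟨hma, h⟩ hne
    · have h' := Finset.mem_erase.1 h
      have h'' := h'.2
      rw [hU, Finset.mem_filter] at h''
      exact ⟨h''.2, h'.1⟩

lemma hRt_ne (hM : IsMatchingSet H M)
    (hMax : ∀ N : Finset (Sym2 α), IsMatchingSet H N → N.card ≤ M.card)
    (hniso : ∀ v : α, ∃ w, H.Adj v w) {a v : α}
    (hunm : ¬ HMatched M v) (hva : v ≠ a) : v ≠ hRt H M a v := by
  rw [hRt]
  split
  · exact hva
  · intro h
    refine hunm ?_
    rw [h]
    exact (hRC_spec (rc_exists hM hMax hniso _)).2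

lemma hZ_adj (hM : IsMatchingSet H M)
    (hMax : ∀ N : Finset (Sym2 α), IsMatchingSet H N → N.card ≤ M.card)
    (hniso : ∀ v : α, ∃ w, H.Adj v w) {a v : α} (hv : v ∈ hS3 H M a) :
    H.Adj (hZ H M a v) v := by
  rw [hZ]
  split
  · next h =>
    have hm : HMatched M (hNb H a) := matched_of_adj hM hMax (hNb_spec (hniso a)) h.1
    rw [h.2]
    exact hPartner_adj hM hm
  · next h =>
    obtain ⟨hunm, hva⟩ := hS3_cases trivial hv h
    exact (hPar_spec (exists_par_of_ne hM hMax hniso (hRt_ne hM hMax hniso hunm hva))).1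

lemma map_mem_edgeSet {β : Type*} {G : SimpleGraph β} {f : α → β}
    (hf : ∀ b c, H.Adj b c → G.Adj (f b) (f c)) {e : Sym2 α} (he : e ∈ H.edgeSet) :
    Sym2.map f e ∈ G.edgeSet := by
  revert he
  induction e with
  | _ b c =>
    intro he
    rw [Sym2.map_pair_eq, SimpleGraph.mem_edgeSet]
    exact hf _ _ ((SimpleGraph.mem_edgeSet H).1 he)

lemma sigma_subtype_val_eq {ι : Type*} {T : Type*} {P : ι → T → Prop} {i j : ι} {x y : T}
    {hx : P i x} {hy : P j y}
    (h : (⟨i, ⟨x, hx⟩⟩ : Σ k, {t // P k t}) = ⟨j, ⟨y, hy⟩⟩) : x = y := by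
  injection h with h1 h2
  subst h1
  exact congrArg Subtype.val (eq_of_heq h2)

lemma hEmb_inj2 {β : Type*} [Fintype β] (G : SimpleGraph β) [DecidableRel G.Adj]
    {w w' : β} (hww : w = w') {z z' : β}
    (hz : z ∈ G.neighborFinset w) (hz' : z' ∈ G.neighborFinset w')
    (h : hEmb G w ⟨z, hz⟩ = hEmb G w' ⟨z', hz'⟩) : z = z' := by
  subst hww
  exact congrArg Subtype.val (hEmb_inj G w h)

end HDegAux2
/-- Let `H` be bipartite on `m` vertices without isolated vertices, all of whose maximal
matchings have size `x`, and let `G` be triangle-free with minimum degree `δ` and maximum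
degree `Δ`. Then the number of injective embeddings of `H` into `G` whose image contains
a vertex `u` of minimum degree is at most `m δ 2^{c-1} |E(G)|^{x-1} Δ^{m-2x}`. -/
theorem hDeg_min_degree_bound {α β : Type*} [Fintype α] [DecidableEq α] [Fintype β]
    (H : SimpleGraph α) (G : SimpleGraph β) [DecidableRel G.Adj] (x : ℕ)
    (hbip : H.Colorable 2) (hniso : ∀ v : α, ∃ w, H.Adj v w)
    (hmatch : ∀ M : Finset (Sym2 α), IsMatchingSet H M →
      (∀ e ∈ H.edgeSet, e ∉ M → ¬ IsMatchingSet H (insert e M)) → M.card = x)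
    (hG : G.CliqueFree 3) (u : β) (hu : G.degree u = G.minDegree) :
    hDeg H G u ≤ Fintype.card α * G.minDegree * 2 ^ (Nat.card H.ConnectedComponent - 1)
      * G.edgeFinset.card ^ (x - 1) * G.maxDegree ^ (Fintype.card α - 2 * x) := by
  classical
  cases isEmpty_or_nonempty α with
  | inl hemp =>
    have h0 : hDeg H G u = 0 := by
      have hie : IsEmpty {f : α → β // Function.Injective f ∧
          (∀ a b, H.Adj a b → G.Adj (f a) (f b)) ∧ u ∈ Set.range f} := by
        refine ⟨fun F => ?_⟩
        obtain ⟨a, -⟩ := F.2.2.2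
        exact isEmptyElim a
      rw [hDeg, Nat.card_of_isEmpty]
    rw [h0]
    exact Nat.zero_le _
  | inr hne =>
    obtain ⟨M, hMmem, hMmaxc⟩ := Finset.exists_max_image
      ((Finset.univ : Finset (Finset (Sym2 α))).filter fun N => IsMatchingSet H N)
      Finset.card ⟨∅, Finset.mem_filter.2 ⟨Finset.mem_univ _, by simp [IsMatchingSet]⟩⟩
    rw [Finset.mem_filter] at hMmem
    have hM : IsMatchingSet H M := hMmem.2
    have hMmax : ∀ e ∈ H.edgeSet, e ∉ M → ¬ IsMatchingSet H (insert e M) := by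
      intro e he hnm hins
      have h1 := hMmaxc (insert e M) (Finset.mem_filter.2 ⟨Finset.mem_univ _, hins⟩)
      rw [Finset.card_insert_of_notMem hnm] at h1
      omega
    have hx : M.card = x := hmatch M hM hMmax
    have hMax : ∀ N : Finset (Sym2 α), IsMatchingSet H N → N.card ≤ M.card :=
      fun N hN => hMmaxc N (Finset.mem_filter.2 ⟨Finset.mem_univ _, hN⟩)
    haveI : Nonempty H.ConnectedComponent := ⟨H.connectedComponentMk hne.some⟩
    haveI : Fintype H.ConnectedComponent := Fintype.ofFinite _
    have hc : Nat.card H.ConnectedComponent = Fintype.card H.ConnectedComponent :=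
      Nat.card_eq_fintype_card
    let Sa : α → Type _ := fun a =>
      {f : α → β // (∀ b c : α, H.Adj b c → G.Adj (f b) (f c)) ∧ f a = u}
    let Fib : α → Type _ := fun a =>
      (↥(G.neighborFinset u)) × (↥(M.erase (hE0 H M a)) → ↥G.edgeFinset) ×
      ({C : H.ConnectedComponent // C ≠ H.connectedComponentMk a} → Bool) ×
      (↥(hS3 H M a) → Fin G.maxDegree)
    have step1 : hDeg H G u ≤ ∑ a : α, Nat.card (Sa a) := by
      let Φ1 : {f : α → β // Function.Injective f ∧
          (∀ a b, H.Adj a b → G.Adj (f a) (f b)) ∧ u ∈ Set.range f} → Σ a : α, Sa a :=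
        fun F => ⟨Classical.choose F.2.2.2, ⟨F.1, F.2.2.1, Classical.choose_spec F.2.2.2⟩⟩
      have hΦ1 : Function.Injective Φ1 := by
        intro F1 F2 h
        exact Subtype.ext (sigma_subtype_val_eq
          (P := fun (k : α) (t : α → β) =>
            (∀ b c : α, H.Adj b c → G.Adj (t b) (t c)) ∧ t k = u) h)
      have h1 : hDeg H G u ≤ Nat.card (Σ a : α, Sa a) :=
        Nat.card_le_card_of_injective Φ1 hΦ1
      rw [Nat.card_eq_fintype_card, Fintype.card_sigma] at h1
      refine h1.trans (le_of_eq (Finset.sum_congr rfl fun a _ => ?_))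
      rw [Nat.card_eq_fintype_card]
    have step2 : ∀ a : α, Nat.card (Sa a) ≤
        G.minDegree * (G.edgeFinset.card ^ (x - 1) *
          (2 ^ (Fintype.card H.ConnectedComponent - 1) *
            G.maxDegree ^ (Fintype.card α - 2 * x))) := by
      intro a
      have hE0m : hE0 H M a ∈ M := hE0_mem hM hMax hniso a
      let Ψ : Sa a → Fib a := fun F =>
        ⟨⟨F.1 (hS H M a), by
            rw [SimpleGraph.mem_neighborFinset]
            have hadj := F.2.1 _ _ (hS_adj hM hniso a)
            rwa [F.2.2] at hadj⟩,
         fun e => ⟨Sym2.map F.1 e.1, by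
            rw [SimpleGraph.mem_edgeFinset]
            exact map_mem_edgeSet F.2.1
              (hM.1 (by exact_mod_cast (Finset.mem_of_mem_erase e.2)))⟩,
         fun C => decide (F.1 (hRC H M C.1) =
            hPick (Sym2.map F.1 (hMedge M (hRC H M C.1)))),
         fun v => hEmb G (F.1 (hZ H M a v.1)) ⟨F.1 v.1, by
            rw [SimpleGraph.mem_neighborFinset]
            exact F.2.1 _ _ (hZ_adj hM hMax hniso v.2)⟩⟩
      have hΨ : Function.Injective Ψ := by
        rintro ⟨f, hf⟩ ⟨g, hg⟩ h
        apply Subtype.ext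
        have c1 : f (hS H M a) = g (hS H M a) :=
          congrArg (fun t : Fib a => (t.1 : β)) h
        have c2 : ∀ e : ↥(M.erase (hE0 H M a)),
            Sym2.map f e.1 = Sym2.map g e.1 :=
          fun e => congrArg (fun t : Fib a => (t.2.1 e : Sym2 β)) h
        have c3 : ∀ C : {C : H.ConnectedComponent // C ≠ H.connectedComponentMk a},
            decide (f (hRC H M C.1) = hPick (Sym2.map f (hMedge M (hRC H M C.1)))) =
            decide (g (hRC H M C.1) = hPick (Sym2.map g (hMedge M (hRC H M C.1)))) :=
          fun C => congrArg (fun t : Fib a => t.2.2.1 C) h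
        have c4 := fun v : ↥(hS3 H M a) => congrArg (fun t : Fib a => t.2.2.2 v) h
        refine hDecode hM hMax hniso hG hf.1 hg.1 hf.2 hg.2 ?_ ?_ ?_ ?_
        · exact c1
        · intro e he hne
          exact c2 ⟨e, Finset.mem_erase.2 ⟨hne, he⟩⟩
        · intro C hC
          exact decide_eq_decide.mp (c3 ⟨C, hC⟩)
        · intro v hv hz
          exact hEmb_inj2 G hz _ _ (c4 ⟨v, hv⟩)
      have hcard : Nat.card (Sa a) ≤ Nat.card (Fib a) :=
        Nat.card_le_card_of_injective Ψ hΨ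
      have hFib : Nat.card (Fib a) =
          G.minDegree * (G.edgeFinset.card ^ (x - 1) *
            (2 ^ (Fintype.card H.ConnectedComponent - 1) *
              G.maxDegree ^ (Fintype.card α - 2 * x))) := by
        rw [Nat.card_eq_fintype_card]
        show Fintype.card ((↥(G.neighborFinset u)) × (↥(M.erase (hE0 H M a)) → ↥G.edgeFinset) ×
          ({C : H.ConnectedComponent // C ≠ H.connectedComponentMk a} → Bool) ×
          (↥(hS3 H M a) → Fin G.maxDegree)) = _
        rw [Fintype.card_prod, Fintype.card_prod, Fintype.card_prod]
        congr 1
        · rw [Fintype.card_coe, SimpleGraph.card_neighborFinset_eq_degree, hu]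
        congr 1
        · rw [Fintype.card_fun, Fintype.card_coe, Fintype.card_coe,
            Finset.card_erase_of_mem hE0m, hx]
        congr 1
        · rw [Fintype.card_fun, Fintype.card_bool]
          congr 1
          have : Fintype.card {C : H.ConnectedComponent // C ≠ H.connectedComponentMk a}
              = Fintype.card H.ConnectedComponent - 1 := by
            rw [Fintype.card_subtype_compl, Fintype.card_subtype_eq]
          rw [this]
        · rw [Fintype.card_fun, Fintype.card_coe, Fintype.card_fin,
            card_hS3 hM hMax hniso a, hx]
      exact hcard.trans_eq hFib
    have step3 : hDeg H G u ≤ Fintype.card α *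
        (G.minDegree * (G.edgeFinset.card ^ (x - 1) *
          (2 ^ (Fintype.card H.ConnectedComponent - 1) *
            G.maxDegree ^ (Fintype.card α - 2 * x)))) := by
      refine step1.trans ?_
      calc ∑ a : α, Nat.card (Sa a) ≤ ∑ _a : α, (G.minDegree * (G.edgeFinset.card ^ (x - 1) *
          (2 ^ (Fintype.card H.ConnectedComponent - 1) *
            G.maxDegree ^ (Fintype.card α - 2 * x)))) := Finset.sum_le_sum fun a _ => step2 a
        _ = _ := by rw [Finset.sum_const, Finset.card_univ, smul_eq_mul]
    refine step3.trans (le_of_eq ?_)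
    rw [hc]
    ring
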